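/- Selection generator identity: for n ≥ 1, ℓ ≥ 2, a colouring rule p = (p_0,…,p_ℓ) ∈ ℝ^{ℓ+1} with p_0 = 0, p_ℓ = 1, v ∈ ℝ^{n+1} and x ∈ [0,1]: ⟨B_{n+ℓ−1}(x), S^{n,ℓ}v⟩ − ⟨B_n(x), v⟩ = ( E[p_{Y}] − x ) · E[ v_{W+1} − v_{W} ], where Y ~ Binomial(ℓ, x) and W ~ Binomial(n−1, x). Equivalently, the right-hand side equals (E[p_Y] − x) · (1/n) · (d/dx)⟨B_n(x), v⟩. -/

import Mathlib

/-- The Bernstein basis polynomial. -/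
noncomputable def bern (n i : ℕ) (x : ℝ) : ℝ := (n.choose i : ℝ) * x^i * (1-x)^(n-i)

/-- Hypergeometric pmf: `P(K_i = j)` for a sample of size `i` from `n + ℓ - 1` objects
of which `ℓ` are marked. -/
noncomputable def hpmf (n ℓ i j : ℕ) : ℝ :=
  if j ≤ i then ((ℓ.choose j : ℝ) * ((n-1).choose (i-j) : ℝ)) / ((n+ℓ-1).choose i : ℝ) else 0

/-- The selection operator `S^{n,ℓ}` with colouring rule `p`. -/
noncomputable def sel (n ℓ : ℕ) (p : ℕ → ℝ) (v : ℕ → ℝ) (i : ℕ) : ℝ :=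
  ∑ j ∈ Finset.range (ℓ+1), hpmf n ℓ i j * (p j * v (i + 1 - j) + (1 - p j) * v (i - j))

/-- Selection generator identity in the Bernstein basis.  Here
`∑ j, p j * bern ℓ j x = E[p_Y]` with `Y ~ Bin(ℓ,x)` and
`∑ i, (v (i+1) - v i) * bern (n-1) i x = E[v_{W+1} - v_W]` with `W ~ Bin(n-1,x)`. -/
lemma bern_sum (m : ℕ) (x : ℝ) : ∑ j ∈ Finset.range (m+1), bern m j x = 1 := by
  have h := add_pow x (1-x) m
  simp only [add_sub_cancel, one_pow] at h
  conv_rhs => rw [h]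
  apply Finset.sum_congr rfl
  intro j _
  simp [bern]; ring

lemma bern_succ (m i : ℕ) (x : ℝ) :
    bern (m+1) (i+1) x = x * bern m i x + (1-x) * bern m (i+1) x := by
  rcases lt_or_ge i m with h | h
  · unfold bern
    rw [Nat.choose_succ_succ]
    have h1 : m + 1 - (i+1) = (m - (i+1)) + 1 := by omega
    have h2 : m - i = (m - (i+1)) + 1 := by omega
    rw [h1, h2]
    push_cast
    ring
  · rcases eq_or_lt_of_le h with h | h
    · subst h
      simp [bern, Nat.choose_eq_zero_of_lt, Nat.choose_self]
      ring
    · rw [bern, bern, bern, Nat.choose_eq_zero_of_lt h, Nat.choose_eq_zero_of_lt (by omega : i+1 > m),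
        Nat.choose_eq_zero_of_lt (by omega : i+1 > m+1)]
      simp

lemma hpmf_bern (n ℓ j k : ℕ) (hn : 1 ≤ n) (hj : j ≤ ℓ) (hk : k ≤ n-1) (x : ℝ) :
    hpmf n ℓ (j+k) j * bern (n+ℓ-1) (j+k) x = bern ℓ j x * bern (n-1) k x := by
  have hM : n + ℓ - 1 = (n-1) + ℓ := by omega
  have hle : j + k ≤ (n-1) + ℓ := by omega
  have hc : ((((n-1)+ℓ).choose (j+k)) : ℝ) ≠ 0 := by
    exact_mod_cast (Nat.choose_pos hle).ne'
  rw [hpmf, if_pos (Nat.le_add_right j k), hM]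
  have hjk : j + k - j = k := by omega
  rw [hjk, bern, bern, bern]
  have he : (n-1) + ℓ - (j+k) = (ℓ - j) + ((n-1) - k) := by omega
  rw [he]
  field_simp
  ring

lemma sel_inner (n ℓ j : ℕ) (hn : 1 ≤ n) (hj : j ≤ ℓ) (p v : ℕ → ℝ) (x : ℝ) :
    ∑ i ∈ Finset.range (n+ℓ),
        hpmf n ℓ i j * (p j * v (i + 1 - j) + (1 - p j) * v (i - j)) * bern (n+ℓ-1) i x
      = ∑ k ∈ Finset.range n,
          bern ℓ j x * bern (n-1) k x * (p j * v (k+1) + (1 - p j) * v k) := by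
  have hsub : Finset.Ico j (j+n) ⊆ Finset.range (n+ℓ) := by
    intro i hi
    simp only [Finset.mem_Ico] at hi
    simp only [Finset.mem_range]
    omega
  rw [← Finset.sum_subset hsub ?zero]
  · rw [Finset.sum_Ico_eq_sum_range]
    simp only [Nat.add_sub_cancel_left]
    apply Finset.sum_congr rfl
    intro k hk
    simp only [Finset.mem_range] at hk
    rw [show j+k+1-j = k+1 from by omega, mul_right_comm, hpmf_bern n ℓ j k hn hj (by omega) x]
  case zero =>
    intro i hi hni
    simp only [Finset.mem_range] at hi
    simp only [Finset.mem_Ico, not_and_or, not_le, not_lt] at hni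
    rcases hni with h | h
    · rw [hpmf, if_neg (by omega)]; ring
    · rw [hpmf, if_pos (by omega), Nat.choose_eq_zero_of_lt (by omega : n - 1 < i - j)]
      simp

lemma bern_raise (m : ℕ) (w : ℕ → ℝ) (x : ℝ) :
    ∑ i ∈ Finset.range (m+2), w i * bern (m+1) i x
      = ∑ k ∈ Finset.range (m+1), (x * w (k+1) + (1-x) * w k) * bern m k x := by
  rw [Finset.sum_range_succ']
  have key : ∀ i, w (i+1) * bern (m+1) (i+1) x
      = x * (w (i+1) * bern m i x) + (w (i+1) * ((1-x) * bern m (i+1) x)) := by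
    intro i; rw [bern_succ]; ring
  simp only [key]
  rw [Finset.sum_add_distrib]
  have h2 : ∑ i ∈ Finset.range (m+1), w (i+1) * ((1-x) * bern m (i+1) x)
      = ∑ i ∈ Finset.range (m+1), w i * ((1-x) * bern m i x) - w 0 * ((1-x) * bern m 0 x) := by
    have := Finset.sum_range_succ' (fun i => w i * ((1-x) * bern m i x)) (m+1)
    rw [Finset.sum_range_succ] at this
    have hz : bern m (m+1) x = 0 := by
      rw [bern, Nat.choose_eq_zero_of_lt (by omega)]; simp
    rw [hz] at this
    simp at this
    linarith [this]
  rw [h2]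
  have h0 : bern (m+1) 0 x = (1-x) * bern m 0 x := by
    rw [bern, bern]; simp [pow_succ]; ring
  rw [h0]
  have hr : ∑ k ∈ Finset.range (m+1), (x * w (k+1) + (1-x) * w k) * bern m k x
      = ∑ k ∈ Finset.range (m+1), (x * (w (k+1) * bern m k x) + w k * ((1-x) * bern m k x)) := by
    apply Finset.sum_congr rfl; intro k _; ring
  rw [hr, Finset.sum_add_distrib]
  ring

lemma hasDerivAt_bern (n i : ℕ) (x : ℝ) :
    HasDerivAt (fun y => bern n i y)
      ((n.choose i : ℝ) * (i * x^(i-1) * (1-x)^(n-i) - ((n:ℝ)-(i:ℝ)) * x^i * (1-x)^(n-i-1))) x := by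
  have h1 : HasDerivAt (fun y : ℝ => y^i) (i * x^(i-1)) x := hasDerivAt_pow i x
  have h2 : HasDerivAt (fun y : ℝ => (1-y)^(n-i)) (((n-i : ℕ) : ℝ) * (1-x)^(n-i-1) * (-1)) x := by
    exact (((hasDerivAt_id x).const_sub 1)).pow (n-i)
  have h3 := (h1.mul h2).const_mul ((n.choose i : ℝ))
  have hf : (fun y => bern n i y) = fun y => (n.choose i : ℝ) * (y^i * (1-y)^(n-i)) := by
    funext y; rw [bern, mul_assoc]
  rw [hf]
  refine h3.congr_deriv ?_
  rcases le_or_gt i n with h | h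
  · rw [Nat.cast_sub h]
    ring
  · rw [Nat.choose_eq_zero_of_lt h]
    simp

lemma choose_mul_real (n k : ℕ) (hn : 1 ≤ n) :
    ((n.choose (k+1) : ℝ)) * (k+1) = (n : ℝ) * ((n-1).choose k : ℝ) := by
  have h' : n * (n-1).choose k = n.choose (k+1) * (k+1) := by
    have h := Nat.add_one_mul_choose_eq (n-1) k
    have hn1 : n - 1 + 1 = n := by omega
    simpa [Nat.succ_eq_add_one, hn1] using h
  exact_mod_cast h'.symm

lemma deriv_bern_sum (n : ℕ) (hn : 1 ≤ n) (v : ℕ → ℝ) (x : ℝ) :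
    deriv (fun y => ∑ i ∈ Finset.range (n+1), v i * bern n i y) x
      = n * ∑ i ∈ Finset.range n, (v (i+1) - v i) * bern (n-1) i x := by
  have hd : HasDerivAt (fun y => ∑ i ∈ Finset.range (n+1), v i * bern n i y)
      (∑ i ∈ Finset.range (n+1),
        v i * ((n.choose i : ℝ) * (i * x^(i-1) * (1-x)^(n-i) - ((n:ℝ)-(i:ℝ)) * x^i * (1-x)^(n-i-1)))) x := by
    apply HasDerivAt.fun_sum
    intro i _
    exact (hasDerivAt_bern n i x).const_mul (v i)
  rw [hd.deriv]
  have split : ∀ i, v i * ((n.choose i : ℝ) * (i * x^(i-1) * (1-x)^(n-i) - ((n:ℝ)-(i:ℝ)) * x^i * (1-x)^(n-i-1)))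
      = v i * ((n.choose i : ℝ) * i) * x^(i-1) * (1-x)^(n-i)
        - v i * ((n.choose i : ℝ) * ((n:ℝ)-(i:ℝ))) * x^i * (1-x)^(n-i-1) := by
    intro i; ring
  simp only [split]
  rw [Finset.sum_sub_distrib]
  have hA : ∑ i ∈ Finset.range (n+1), v i * ((n.choose i : ℝ) * i) * x^(i-1) * (1-x)^(n-i)
      = n * ∑ k ∈ Finset.range n, v (k+1) * bern (n-1) k x := by
    rw [Finset.sum_range_succ']
    simp only [Nat.cast_zero, mul_zero, zero_mul, add_zero]
    rw [Finset.mul_sum]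
    apply Finset.sum_congr rfl
    intro k hk
    simp only [Finset.mem_range] at hk
    have he1 : k + 1 - 1 = k := rfl
    have he2 : n - (k+1) = n - 1 - k := by omega
    rw [he1, he2, bern]
    have hch := choose_mul_real n k hn
    push_cast
    linear_combination v (k+1) * x^k * (1-x)^(n-1-k) * hch
  have hB : ∑ i ∈ Finset.range (n+1), v i * ((n.choose i : ℝ) * ((n:ℝ)-(i:ℝ))) * x^i * (1-x)^(n-i-1)
      = n * ∑ k ∈ Finset.range n, v k * bern (n-1) k x := by
    rw [Finset.sum_range_succ]
    simp only [sub_self, mul_zero, zero_mul, add_zero]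
    rw [Finset.mul_sum]
    apply Finset.sum_congr rfl
    intro k hk
    simp only [Finset.mem_range] at hk
    have hch2 : ((n.choose k : ℝ)) * ((n:ℝ)-(k:ℝ)) = (n:ℝ) * ((n-1).choose k : ℝ) := by
      have h1 : n.choose k * (n - k) = n.choose (k+1) * (k+1) := (Nat.choose_succ_right_eq n k).symm
      have h2 : ((n.choose k : ℝ)) * ((n:ℝ)-(k:ℝ)) = ((n.choose (k+1) : ℝ)) * ((k:ℝ)+1) := by
        have := congrArg (Nat.cast (R := ℝ)) h1
        push_cast [Nat.cast_sub (le_of_lt hk)] at this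
        linarith [this]
      rw [h2, choose_mul_real n k hn]
    have he : n - k - 1 = n - 1 - k := by omega
    rw [he, bern]
    linear_combination v k * x^k * (1-x)^(n-1-k) * hch2
  rw [hA, hB, Finset.mul_sum, Finset.mul_sum, ← Finset.sum_sub_distrib, Finset.mul_sum]
  apply Finset.sum_congr rfl
  intro k _
  ring

theorem selection_generator_bernstein (n ℓ : ℕ) (hn : 1 ≤ n) (hℓ : 2 ≤ ℓ)
    (p : ℕ → ℝ) (hp0 : p 0 = 0) (hpℓ : p ℓ = 1) (v : ℕ → ℝ)
    (x : ℝ) (hx : x ∈ Set.Icc (0:ℝ) 1) :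
    (∑ i ∈ Finset.range (n+ℓ), sel n ℓ p v i * bern (n+ℓ-1) i x) -
        (∑ i ∈ Finset.range (n+1), v i * bern n i x) =
      ((∑ j ∈ Finset.range (ℓ+1), p j * bern ℓ j x) - x) *
        (∑ i ∈ Finset.range n, (v (i+1) - v i) * bern (n-1) i x) ∧
    ((∑ j ∈ Finset.range (ℓ+1), p j * bern ℓ j x) - x) *
        (∑ i ∈ Finset.range n, (v (i+1) - v i) * bern (n-1) i x) =
      ((∑ j ∈ Finset.range (ℓ+1), p j * bern ℓ j x) - x) * (1 / (n : ℝ)) *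
        deriv (fun y => ∑ i ∈ Finset.range (n+1), v i * bern n i y) x := by
  set S1 := ∑ k ∈ Finset.range n, v (k+1) * bern (n-1) k x with hS1
  set S0 := ∑ k ∈ Finset.range n, v k * bern (n-1) k x with hS0
  set P := ∑ j ∈ Finset.range (ℓ+1), p j * bern ℓ j x with hP
  have hPsum := bern_sum ℓ x
  have hD : ∑ i ∈ Finset.range n, (v (i+1) - v i) * bern (n-1) i x = S1 - S0 := by
    rw [hS1, hS0, ← Finset.sum_sub_distrib]
    apply Finset.sum_congr rfl
    intro k _; ring
  have key1 : (∑ i ∈ Finset.range (n+ℓ), sel n ℓ p v i * bern (n+ℓ-1) i x)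
      = P * S1 + (1 - P) * S0 := by
    simp only [sel, Finset.sum_mul]
    rw [Finset.sum_comm]
    have step : ∀ j ∈ Finset.range (ℓ+1),
        (∑ i ∈ Finset.range (n+ℓ),
          hpmf n ℓ i j * (p j * v (i + 1 - j) + (1 - p j) * v (i - j)) * bern (n+ℓ-1) i x)
        = p j * bern ℓ j x * S1 + (1 - p j) * bern ℓ j x * S0 := by
      intro j hj
      rw [sel_inner n ℓ j hn (by simpa [Nat.lt_succ_iff] using hj) p v x]
      rw [hS1, hS0, Finset.mul_sum, Finset.mul_sum, ← Finset.sum_add_distrib]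
      apply Finset.sum_congr rfl
      intro k _; ring
    rw [Finset.sum_congr rfl step, Finset.sum_add_distrib]
    have e1 : ∑ j ∈ Finset.range (ℓ+1), p j * bern ℓ j x * S1 = P * S1 := by
      rw [hP, Finset.sum_mul]
    have e2 : ∑ j ∈ Finset.range (ℓ+1), (1 - p j) * bern ℓ j x * S0 = (1 - P) * S0 := by
      have hstep : ∀ j ∈ Finset.range (ℓ+1),
          (1 - p j) * bern ℓ j x * S0 = bern ℓ j x * S0 - p j * bern ℓ j x * S0 := by
        intro j _; ring
      rw [Finset.sum_congr rfl hstep, Finset.sum_sub_distrib, ← Finset.sum_mul,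
        ← Finset.sum_mul, hPsum]
      rw [hP]; ring
    rw [e1, e2]
  have key2 : ∑ i ∈ Finset.range (n+1), v i * bern n i x = x * S1 + (1-x) * S0 := by
    obtain ⟨m, rfl⟩ : ∃ m, n = m + 1 := ⟨n - 1, by omega⟩
    rw [show m + 1 + 1 = m + 2 from rfl, bern_raise]
    simp only [Nat.add_sub_cancel] at hS1 hS0 ⊢
    rw [hS1, hS0, Finset.mul_sum, Finset.mul_sum, ← Finset.sum_add_distrib]
    apply Finset.sum_congr rfl
    intro k _; ring
  have hderiv := deriv_bern_sum n hn v x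
  rw [hD] at hderiv
  constructor
  · rw [key1, key2, hD]; ring
  · rw [hD, hderiv]
    have hn0 : (n : ℝ) ≠ 0 := by positivity
    field_simp
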